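/- Let A ∈ ℝ^{N×N} be a symmetric matrix with nonnegative entries, K ≥ 0 an integer, and S = Ã(A)^K (Ã(A)^K)ᵀ. For every ε > 0 and δ > 0 there exists d₀ such that for every integer d > d₀ and all indices i, j: under the probability measure μ_{N,d} on N×d matrices E with i.i.d. N(0,1) entries, the event { E : |S_{ij} − (1/d)·(Ã(A)^K E)_{i,:} · (Ã(A)^K E)_{j,:}| < ε } has probability greater than 1 − δ. -/

import Mathlib

open MeasureTheory ProbabilityTheory Matrix

/-- The normalized adjacency matrix with self-loops
`Ã(A) = (D(A)+I)^{-1/2} (A+I) (D(A)+I)^{-1/2}`, where `D(A)` is the diagonal matrix of row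
sums and `(D(A)+I)^{-1/2}` is the diagonal matrix with entries `(D(A)_{ii}+1)^{-1/2}`. -/
noncomputable def normAdj {n : Type*} [Fintype n] [DecidableEq n]
    (A : Matrix n n ℝ) : Matrix n n ℝ :=
  Matrix.diagonal (fun i => (Real.sqrt ((∑ j, A i j) + 1))⁻¹) * (A + 1) *
    Matrix.diagonal (fun i => (Real.sqrt ((∑ j, A i j) + 1))⁻¹)

/-- Matrices are measurable as functions. -/
instance {m n α : Type*} [MeasurableSpace α] : MeasurableSpace (Matrix m n α) :=
  inferInstanceAs (MeasurableSpace (m → n → α))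

/-- The probability measure on `n × d` real matrices under which all entries are
independent standard Gaussians `N(0,1)`. -/
noncomputable def gaussMatrix (n d : ℕ) : Measure (Matrix (Fin n) (Fin d) ℝ) :=
  Measure.pi fun _ : Fin n => Measure.pi fun _ : Fin d => gaussianReal 0 1

namespace SMPAux

open Real
open scoped NNReal ENNReal


noncomputable def gam : Measure ℝ := gaussianReal 0 1

instance : IsProbabilityMeasure gam := by unfold gam; infer_instance

lemma integrable_pow_gauss_vol (n : ℕ) :
    Integrable (fun x : ℝ => x ^ n * Real.exp (-x ^ 2 / 2)) := by
  have hg : Integrable (fun x : ℝ => Real.exp (-(4⁻¹ : ℝ) * x ^ 2)) :=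
    integrable_exp_neg_mul_sq (by norm_num)
  refine Integrable.mono' (hg.const_mul ((n.factorial : ℝ) * Real.exp 1)) ?_ ?_
  · exact ((continuous_pow n).mul (by continuity)).aestronglyMeasurable
  · refine Filter.Eventually.of_forall fun x => ?_
    have h1 : |x| ^ n ≤ (n.factorial : ℝ) * Real.exp |x| := by
      have h := Real.pow_div_factorial_le_exp (|x|) (abs_nonneg x) n
      rw [div_le_iff₀ (by positivity)] at h
      linarith [h]
    have h2 : Real.exp |x| * Real.exp (-x ^ 2 / 2) ≤ Real.exp 1 * Real.exp (-(4⁻¹) * x ^ 2) := by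
      rw [← Real.exp_add, ← Real.exp_add]
      apply Real.exp_le_exp.2
      nlinarith [sq_nonneg (|x| - 2), sq_abs x]
    have hx : ‖x ^ n * Real.exp (-x ^ 2 / 2)‖ = |x| ^ n * Real.exp (-x ^ 2 / 2) := by
      rw [norm_mul, norm_pow, Real.norm_eq_abs, Real.norm_eq_abs,
        abs_of_pos (Real.exp_pos _)]
    rw [hx]
    calc |x| ^ n * Real.exp (-x ^ 2 / 2) ≤ ((n.factorial : ℝ) * Real.exp |x|) * Real.exp (-x ^ 2 / 2) := by
          apply mul_le_mul_of_nonneg_right h1 (Real.exp_pos _).le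
      _ = (n.factorial : ℝ) * (Real.exp |x| * Real.exp (-x ^ 2 / 2)) := by ring
      _ ≤ (n.factorial : ℝ) * (Real.exp 1 * Real.exp (-(4⁻¹) * x ^ 2)) := by
          apply mul_le_mul_of_nonneg_left h2 (by positivity)
      _ = (n.factorial : ℝ) * Real.exp 1 * Real.exp (-(4⁻¹) * x ^ 2) := by ring

lemma gauss_I_rec (n : ℕ) :
    ∫ x : ℝ, x ^ (n + 2) * Real.exp (-x ^ 2 / 2)
      = (n + 1 : ℝ) * ∫ x : ℝ, x ^ n * Real.exp (-x ^ 2 / 2) := by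
  have hderiv : ∀ x : ℝ, HasDerivAt (fun y : ℝ => y ^ (n + 1) * Real.exp (-y ^ 2 / 2))
      ((n + 1 : ℝ) * (x ^ n * Real.exp (-x ^ 2 / 2)) - x ^ (n + 2) * Real.exp (-x ^ 2 / 2)) x := by
    intro x
    have h1 : HasDerivAt (fun y : ℝ => -y ^ 2 / 2) (-x) x := by
      have := ((hasDerivAt_pow 2 x).neg).div_const 2
      refine this.congr_deriv ?_
      push_cast; ring
    have h2 := h1.exp
    have h3 := (hasDerivAt_pow (n + 1) x).mul h2
    refine h3.congr_deriv ?_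
    push_cast
    ring
  have key := integral_eq_zero_of_hasDerivAt_of_integrable hderiv
    (((integrable_pow_gauss_vol n).const_mul ((n : ℝ) + 1)).sub (integrable_pow_gauss_vol (n + 2)))
    (integrable_pow_gauss_vol (n + 1))
  rw [integral_sub ((integrable_pow_gauss_vol n).const_mul ((n : ℝ) + 1))
    (integrable_pow_gauss_vol (n + 2)), integral_const_mul] at key
  linarith [key]

lemma gauss_I_zero : ∫ x : ℝ, x ^ 0 * Real.exp (-x ^ 2 / 2) = Real.sqrt (2 * π) := by
  have h : ∀ x : ℝ, x ^ 0 * Real.exp (-x ^ 2 / 2) = Real.exp (-(1/2 : ℝ) * x ^ 2) := by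
    intro x; rw [pow_zero, one_mul]; congr 1; ring
  simp only [h]
  rw [integral_gaussian]
  congr 1
  ring

lemma gauss_I_one : ∫ x : ℝ, x ^ 1 * Real.exp (-x ^ 2 / 2) = 0 := by
  have hderiv : ∀ x : ℝ, HasDerivAt (fun y : ℝ => -Real.exp (-y ^ 2 / 2))
      (x ^ 1 * Real.exp (-x ^ 2 / 2)) x := by
    intro x
    have h1 : HasDerivAt (fun y : ℝ => -y ^ 2 / 2) (-x) x := by
      have := ((hasDerivAt_pow 2 x).neg).div_const 2
      refine this.congr_deriv ?_
      push_cast; ring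
    have h2 := h1.exp.neg
    refine h2.congr_deriv ?_
    ring
  have hf : Integrable (fun y : ℝ => -Real.exp (-y ^ 2 / 2)) :=
    (integrable_pow_gauss_vol 0).neg.congr (Filter.Eventually.of_forall fun x => by simp)
  exact integral_eq_zero_of_hasDerivAt_of_integrable hderiv (integrable_pow_gauss_vol 1) hf


lemma gaussianPDFReal_simp (x : ℝ) :
    gaussianPDFReal 0 1 x = (Real.sqrt (2 * π))⁻¹ * Real.exp (-x ^ 2 / 2) := by
  unfold gaussianPDFReal
  norm_num

lemma gam_eq : gam = (volume : Measure ℝ).withDensity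
    (fun x => ((Real.toNNReal (gaussianPDFReal 0 1 x) : ℝ≥0) : ℝ≥0∞)) := by
  rw [gam, gaussianReal_of_var_ne_zero _ one_ne_zero]
  congr 1

lemma integral_gam (g : ℝ → ℝ) :
    ∫ x, g x ∂gam = (Real.sqrt (2 * π))⁻¹ * ∫ x, g x * Real.exp (-x ^ 2 / 2) := by
  rw [gam_eq, integral_withDensity_eq_integral_smul
    ((measurable_gaussianPDFReal 0 1).real_toNNReal) g]
  have h : ∀ x : ℝ, (Real.toNNReal (gaussianPDFReal 0 1 x) : ℝ≥0) • g x
      = (Real.sqrt (2 * π))⁻¹ * (g x * Real.exp (-x ^ 2 / 2)) := by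
    intro x
    rw [NNReal.smul_def, Real.coe_toNNReal _ (gaussianPDFReal_nonneg 0 1 x),
      gaussianPDFReal_simp, smul_eq_mul]
    ring
  simp only [h]
  rw [integral_const_mul]

lemma integrable_pow_gam (n : ℕ) : Integrable (fun x : ℝ => x ^ n) gam := by
  rw [gam_eq, integrable_withDensity_iff_integrable_smul
    ((measurable_gaussianPDFReal 0 1).real_toNNReal)]
  have h : ∀ x : ℝ, (Real.toNNReal (gaussianPDFReal 0 1 x) : ℝ≥0) • (x ^ n)
      = (Real.sqrt (2 * π))⁻¹ * (x ^ n * Real.exp (-x ^ 2 / 2)) := by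
    intro x
    rw [NNReal.smul_def, Real.coe_toNNReal _ (gaussianPDFReal_nonneg 0 1 x),
      gaussianPDFReal_simp, smul_eq_mul]
    ring
  refine Integrable.congr ((integrable_pow_gauss_vol n).const_mul ((Real.sqrt (2 * π))⁻¹)) ?_
  exact Filter.Eventually.of_forall fun x => (h x).symm

noncomputable def Mo (n : ℕ) : ℝ := ∫ x, x ^ n ∂gam

lemma sqrt_two_pi_pos : 0 < Real.sqrt (2 * π) := Real.sqrt_pos.2 (by positivity)

lemma Mo_eq (n : ℕ) : Mo n = (Real.sqrt (2 * π))⁻¹ * ∫ x : ℝ, x ^ n * Real.exp (-x ^ 2 / 2) :=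
  integral_gam _

lemma Mo_zero : Mo 0 = 1 := by
  rw [Mo_eq, gauss_I_zero]
  field_simp

lemma Mo_one : Mo 1 = 0 := by rw [Mo_eq, gauss_I_one, mul_zero]

lemma Mo_two : Mo 2 = 1 := by
  rw [Mo_eq, gauss_I_rec 0]
  rw [gauss_I_zero]
  push_cast
  field_simp
  norm_num

lemma Mo_three : Mo 3 = 0 := by
  rw [Mo_eq, gauss_I_rec 1, gauss_I_one]
  ring

lemma Mo_four : Mo 4 = 3 := by
  rw [Mo_eq, gauss_I_rec 2, gauss_I_rec 0, gauss_I_zero]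
  push_cast
  rw [mul_comm]
  field_simp
  ring

lemma Mo_abs_le (n : ℕ) (hn : n ≤ 4) : |Mo n| ≤ 3 ^ n := by
  interval_cases n <;>
    simp [Mo_zero, Mo_one, Mo_two, Mo_three, Mo_four] <;> norm_num


section Monomials

variable {n d : ℕ}

noncomputable local instance realGaussSpace : MeasureSpace ℝ := ⟨gam⟩

local instance : IsProbabilityMeasure (volume : Measure ℝ) :=
  inferInstanceAs (IsProbabilityMeasure gam)

lemma mon_val (e : Fin n → Fin d → ℕ) :
    ∫ E : Matrix (Fin n) (Fin d) ℝ, (∏ m, ∏ k, E m k ^ e m k) ∂(gaussMatrix n d)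
      = ∏ m, ∏ k, Mo (e m k) := by
  have inner : ∀ m : Fin n, (∫ r : Fin d → ℝ, ∏ k, (r k) ^ (e m k)) = ∏ k, Mo (e m k) :=
    fun m => MeasureTheory.integral_fintype_prod_eq_prod (𝕜 := ℝ) (fun k x => x ^ e m k)
  have outer := MeasureTheory.integral_fintype_prod_eq_prod (𝕜 := ℝ) (μ := fun _ : Fin n => (volume : Measure (Fin d → ℝ)))
      (fun m (r : Fin d → ℝ) => ∏ k, (r k) ^ (e m k))
  refine Eq.trans ?_ (Finset.prod_congr rfl fun m _ => inner m)
  exact outer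

lemma mon_int (e : Fin n → Fin d → ℕ) :
    Integrable (fun E : Matrix (Fin n) (Fin d) ℝ => ∏ m, ∏ k, E m k ^ e m k)
      (gaussMatrix n d) :=
  MeasureTheory.Integrable.fintype_prod (𝕜 := ℝ)
    (f := fun m (r : Fin d → ℝ) => ∏ k, (r k) ^ (e m k))
    (fun m => MeasureTheory.Integrable.fintype_prod (f := fun k (x : ℝ) => x ^ (e m k))
      (fun k => integrable_pow_gam (e m k)))

end Monomials

section Entries

variable {n d : ℕ}

def ind (a : Fin n) (b : Fin d) : Fin n → Fin d → ℕ := fun m k =>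
  if a = m ∧ b = k then 1 else 0

lemma ind_le (a : Fin n) (b : Fin d) (m : Fin n) (k : Fin d) : ind a b m k ≤ 1 := by
  unfold ind; split <;> norm_num

lemma ind_sum (a : Fin n) (b : Fin d) : ∑ m, ∑ k, ind a b m k = 1 := by
  have h : ∀ m, ∑ k, ind a b m k = if a = m then 1 else 0 := by
    intro m
    by_cases hm : a = m <;> simp [ind, hm]
  simp [h]

lemma prodpow_add (x : Fin n → Fin d → ℝ) (e1 e2 : Fin n → Fin d → ℕ) :
    ∏ m, ∏ k, x m k ^ (e1 m k + e2 m k)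
      = (∏ m, ∏ k, x m k ^ e1 m k) * (∏ m, ∏ k, x m k ^ e2 m k) := by
  simp [pow_add, Finset.prod_mul_distrib]

lemma prodpow_single (x : Fin n → Fin d → ℝ) (a : Fin n) (b : Fin d) :
    ∏ m, ∏ k, x m k ^ ind a b m k = x a b := by
  have h1 : ∀ m, (∏ k, x m k ^ ind a b m k) = if a = m then x m b else 1 := by
    intro m
    by_cases hm : a = m
    · subst hm
      rw [if_pos rfl]
      have h2 : ∀ k, x a k ^ ind a b a k = if b = k then x a k else 1 := by
        intro k
        by_cases hk : b = k <;> simp [ind, hk]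
      simp only [h2, Finset.prod_ite_eq, Finset.mem_univ, if_true]
    · rw [if_neg hm]
      have h2 : ∀ k, x m k ^ ind a b m k = 1 := by
        intro k; simp [ind, hm]
      simp [h2]
  simp only [h1, Finset.prod_ite_eq, Finset.mem_univ, if_true]

lemma Fprod_Mo_pair (a a' : Fin n) (b : Fin d) :
    ∏ m, ∏ k, Mo (ind a b m k + ind a' b m k) = if a = a' then 1 else 0 := by
  by_cases h : a = a'
  · subst h
    have h1 : ∀ (m : Fin n) (k : Fin d), Mo (ind a b m k + ind a b m k) = 1 := by
      intro m k
      by_cases hm : a = m ∧ b = k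
      · simp [ind, hm, Mo_two]
      · simp [ind, hm, Mo_zero]
    simp [h1]
  · rw [if_neg h]
    refine Finset.prod_eq_zero (Finset.mem_univ a) ?_
    refine Finset.prod_eq_zero (Finset.mem_univ b) ?_
    have h1 : ind a b a b + ind a' b a b = 1 := by
      simp [ind, Ne.symm h]
    rw [h1, Mo_one]

lemma Fprod_Mo_quad (a1 a2 a3 a4 : Fin n) {b b' : Fin d} (hb : b ≠ b') :
    ∏ m, ∏ k, Mo ((ind a1 b m k + ind a2 b m k) + (ind a3 b' m k + ind a4 b' m k))
      = (if a1 = a2 then (1:ℝ) else 0) * (if a3 = a4 then 1 else 0) := by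
  have key : ∀ (m : Fin n) (k : Fin d),
      Mo ((ind a1 b m k + ind a2 b m k) + (ind a3 b' m k + ind a4 b' m k))
      = Mo (ind a1 b m k + ind a2 b m k) * Mo (ind a3 b' m k + ind a4 b' m k) := by
    intro m k
    by_cases hk : b = k
    · have h2 : ind a3 b' m k + ind a4 b' m k = 0 := by
        subst hk
        simp [ind, Ne.symm hb]
      rw [h2, add_zero, Mo_zero, mul_one]
    · have h1 : ind a1 b m k + ind a2 b m k = 0 := by simp [ind, hk]
      rw [h1, zero_add, Mo_zero, one_mul]
  simp only [key, Finset.prod_mul_distrib]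
  rw [Fprod_Mo_pair, Fprod_Mo_pair]

lemma Fprod_Mo_abs_le (e : Fin n → Fin d → ℕ) (he : ∀ m k, e m k ≤ 4)
    (hs : ∑ m, ∑ k, e m k = 4) : |∏ m, ∏ k, Mo (e m k)| ≤ 81 := by
  have h1 : |∏ m, ∏ k, Mo (e m k)| ≤ ∏ m, ∏ k, (3:ℝ) ^ (e m k) := by
    rw [Finset.abs_prod]
    refine Finset.prod_le_prod (fun _ _ => abs_nonneg _) (fun m _ => ?_)
    rw [Finset.abs_prod]
    exact Finset.prod_le_prod (fun _ _ => abs_nonneg _) (fun k _ => Mo_abs_le _ (he m k))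
  refine h1.trans ?_
  have h2 : ∀ m : Fin n, ∏ k, (3:ℝ) ^ e m k = 3 ^ (∑ k, e m k) := fun m =>
    Finset.prod_pow_eq_pow_sum _ _ _
  rw [Finset.prod_congr rfl fun m _ => h2 m, Finset.prod_pow_eq_pow_sum, hs]
  norm_num

lemma fun_eq_two (a a' : Fin n) (b : Fin d) (E : Matrix (Fin n) (Fin d) ℝ) :
    E a b * E a' b = ∏ m, ∏ k, E m k ^ (ind a b m k + ind a' b m k) := by
  rw [prodpow_add (E : Fin n → Fin d → ℝ), prodpow_single (E : Fin n → Fin d → ℝ),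
    prodpow_single (E : Fin n → Fin d → ℝ)]

lemma fun_eq_four (a1 a2 a3 a4 : Fin n) (b b' : Fin d) (E : Matrix (Fin n) (Fin d) ℝ) :
    (E a1 b * E a2 b) * (E a3 b' * E a4 b')
      = ∏ m, ∏ k, E m k ^ ((ind a1 b m k + ind a2 b m k) + (ind a3 b' m k + ind a4 b' m k)) := by
  rw [prodpow_add (E : Fin n → Fin d → ℝ), ← fun_eq_two, ← fun_eq_two]

lemma J2 (a a' : Fin n) (b : Fin d) :
    ∫ E, E a b * E a' b ∂(gaussMatrix n d) = if a = a' then 1 else 0 := by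
  simp_rw [fun_eq_two]
  rw [mon_val, Fprod_Mo_pair]

lemma J2int (a a' : Fin n) (b : Fin d) :
    Integrable (fun E : Matrix (Fin n) (Fin d) ℝ => E a b * E a' b) (gaussMatrix n d) :=
  (mon_int _).congr (Filter.Eventually.of_forall fun E => (fun_eq_two a a' b E).symm)

lemma J4off (a1 a2 a3 a4 : Fin n) {b b' : Fin d} (hb : b ≠ b') :
    ∫ E, (E a1 b * E a2 b) * (E a3 b' * E a4 b') ∂(gaussMatrix n d)
      = (if a1 = a2 then (1:ℝ) else 0) * (if a3 = a4 then 1 else 0) := by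
  simp_rw [fun_eq_four]
  rw [mon_val, Fprod_Mo_quad _ _ _ _ hb]

lemma J4int (a1 a2 a3 a4 : Fin n) (b b' : Fin d) :
    Integrable (fun E : Matrix (Fin n) (Fin d) ℝ => (E a1 b * E a2 b) * (E a3 b' * E a4 b'))
      (gaussMatrix n d) :=
  (mon_int _).congr (Filter.Eventually.of_forall fun E => (fun_eq_four a1 a2 a3 a4 b b' E).symm)

lemma J4diag_abs (a1 a2 a3 a4 : Fin n) (b : Fin d) :
    |∫ E, (E a1 b * E a2 b) * (E a3 b * E a4 b) ∂(gaussMatrix n d)| ≤ 81 := by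
  simp_rw [fun_eq_four]
  rw [mon_val]
  apply Fprod_Mo_abs_le
  · intro m k
    have h1 := ind_le a1 b m k
    have h2 := ind_le a2 b m k
    have h3 := ind_le a3 b m k
    have h4 := ind_le a4 b m k
    omega
  · simp only [Finset.sum_add_distrib, ind_sum]
    norm_num

end Entries


section Columns

variable {n d : ℕ} (c bb : Fin n → ℝ)

/-- The contribution of column `k` to the inner product decoder. -/
def gcol (k : Fin d) : Matrix (Fin n) (Fin d) ℝ → ℝ :=
  fun E => (∑ m, c m * E m k) * (∑ m, bb m * E m k)

lemma gcol_expand (k : Fin d) (E : Matrix (Fin n) (Fin d) ℝ) :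
    gcol c bb k E = ∑ p : Fin n × Fin n, (c p.1 * bb p.2) * (E p.1 k * E p.2 k) := by
  rw [Fintype.sum_prod_type]
  show (∑ m, c m * E m k) * (∑ m, bb m * E m k) = _
  rw [Finset.sum_mul_sum]
  exact Finset.sum_congr rfl fun m _ => Finset.sum_congr rfl fun m' _ => by ring

lemma gcol_int (k : Fin d) : Integrable (gcol c bb k) (gaussMatrix n d) := by
  have h : gcol c bb k = fun E : Matrix (Fin n) (Fin d) ℝ =>
      ∑ p : Fin n × Fin n, (c p.1 * bb p.2) * (E p.1 k * E p.2 k) :=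
    funext (gcol_expand c bb k)
  rw [h]
  exact integrable_finset_sum _ fun p _ => (J2int p.1 p.2 k).const_mul _

lemma gcol_integral (k : Fin d) :
    ∫ E, gcol c bb k E ∂(gaussMatrix n d) = ∑ m, c m * bb m := by
  simp_rw [gcol_expand]
  rw [integral_finset_sum _ fun p _ => (J2int p.1 p.2 k).const_mul _]
  simp_rw [integral_const_mul, J2]
  rw [Fintype.sum_prod_type]
  simp [mul_ite, Finset.sum_ite_eq]

lemma gcol_mul_expand (k k' : Fin d) (E : Matrix (Fin n) (Fin d) ℝ) :
    gcol c bb k E * gcol c bb k' E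
      = ∑ p : Fin n × Fin n, ∑ q : Fin n × Fin n,
          ((c p.1 * bb p.2) * (c q.1 * bb q.2)) * ((E p.1 k * E p.2 k) * (E q.1 k' * E q.2 k')) := by
  rw [gcol_expand, gcol_expand, Finset.sum_mul_sum]
  exact Finset.sum_congr rfl fun p _ => Finset.sum_congr rfl fun q _ => by ring

lemma gcol_mul_int (k k' : Fin d) :
    Integrable (fun E => gcol c bb k E * gcol c bb k' E) (gaussMatrix n d) := by
  have h : (fun E : Matrix (Fin n) (Fin d) ℝ => gcol c bb k E * gcol c bb k' E)
      = fun E => ∑ p : Fin n × Fin n, ∑ q : Fin n × Fin n,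
          ((c p.1 * bb p.2) * (c q.1 * bb q.2))
            * ((E p.1 k * E p.2 k) * (E q.1 k' * E q.2 k')) :=
    funext (gcol_mul_expand c bb k k')
  rw [h]
  exact integrable_finset_sum _ fun p _ => integrable_finset_sum _ fun q _ =>
    (J4int p.1 p.2 q.1 q.2 k k').const_mul _

lemma gcol_mul_integral (k k' : Fin d) :
    ∫ E, gcol c bb k E * gcol c bb k' E ∂(gaussMatrix n d)
      = ∑ p : Fin n × Fin n, ∑ q : Fin n × Fin n,
          ((c p.1 * bb p.2) * (c q.1 * bb q.2))
            * ∫ E, (E p.1 k * E p.2 k) * (E q.1 k' * E q.2 k') ∂(gaussMatrix n d) := by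
  simp_rw [gcol_mul_expand]
  rw [integral_finset_sum _ fun p _ => integrable_finset_sum _ fun q _ =>
    (J4int p.1 p.2 q.1 q.2 k k').const_mul _]
  refine Finset.sum_congr rfl fun p _ => ?_
  rw [integral_finset_sum _ fun q _ => (J4int p.1 p.2 q.1 q.2 k k').const_mul _]
  exact Finset.sum_congr rfl fun q _ => integral_const_mul _ _

lemma sum_pair_diag : ∑ p : Fin n × Fin n, (c p.1 * bb p.2) * (if p.1 = p.2 then (1:ℝ) else 0)
    = ∑ m, c m * bb m := by
  rw [Fintype.sum_prod_type]
  simp [mul_ite, Finset.sum_ite_eq]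

lemma gcol_mul_integral_off {k k' : Fin d} (hkk' : k ≠ k') :
    ∫ E, gcol c bb k E * gcol c bb k' E ∂(gaussMatrix n d)
      = (∑ m, c m * bb m) * (∑ m, c m * bb m) := by
  rw [gcol_mul_integral]
  have h : ∀ p q : Fin n × Fin n,
      ((c p.1 * bb p.2) * (c q.1 * bb q.2))
          * ∫ E, (E p.1 k * E p.2 k) * (E q.1 k' * E q.2 k') ∂(gaussMatrix n d)
        = ((c p.1 * bb p.2) * (if p.1 = p.2 then (1:ℝ) else 0))
          * ((c q.1 * bb q.2) * (if q.1 = q.2 then (1:ℝ) else 0)) := by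
    intro p q
    rw [J4off _ _ _ _ hkk']
    ring
  simp_rw [h]
  rw [← Finset.sum_mul_sum, sum_pair_diag]

lemma gcol_sq_integral_abs (k : Fin d) :
    |∫ E, gcol c bb k E * gcol c bb k E ∂(gaussMatrix n d)|
      ≤ 81 * ((∑ m, |c m|) * (∑ m, |bb m|)) ^ 2 := by
  rw [gcol_mul_integral]
  have hb : ∀ p q : Fin n × Fin n,
      |((c p.1 * bb p.2) * (c q.1 * bb q.2))
        * ∫ E, (E p.1 k * E p.2 k) * (E q.1 k * E q.2 k) ∂(gaussMatrix n d)|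
      ≤ (|c p.1 * bb p.2| * 9) * (|c q.1 * bb q.2| * 9) := by
    intro p q
    rw [abs_mul]
    have h81 := J4diag_abs p.1 p.2 q.1 q.2 k
    have hnn : (0:ℝ) ≤ |c p.1 * bb p.2 * (c q.1 * bb q.2)| := abs_nonneg _
    calc |c p.1 * bb p.2 * (c q.1 * bb q.2)|
          * |∫ E, (E p.1 k * E p.2 k) * (E q.1 k * E q.2 k) ∂(gaussMatrix n d)|
        ≤ |c p.1 * bb p.2 * (c q.1 * bb q.2)| * 81 := mul_le_mul_of_nonneg_left h81 hnn
      _ = (|c p.1 * bb p.2| * 9) * (|c q.1 * bb q.2| * 9) := by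
          rw [abs_mul]
          ring
  have h2 : |∑ p : Fin n × Fin n, ∑ q : Fin n × Fin n,
      ((c p.1 * bb p.2) * (c q.1 * bb q.2))
        * ∫ E, (E p.1 k * E p.2 k) * (E q.1 k * E q.2 k) ∂(gaussMatrix n d)|
      ≤ ∑ p : Fin n × Fin n, ∑ q : Fin n × Fin n,
          (|c p.1 * bb p.2| * 9) * (|c q.1 * bb q.2| * 9) :=
    (Finset.abs_sum_le_sum_abs _ _).trans (Finset.sum_le_sum fun p _ =>
      (Finset.abs_sum_le_sum_abs _ _).trans (Finset.sum_le_sum fun q _ => hb p q))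
  refine h2.trans (le_of_eq ?_)
  rw [← Finset.sum_mul_sum]
  have h1 : ∑ p : Fin n × Fin n, |c p.1 * bb p.2| * 9
      = ((∑ m, |c m|) * (∑ m, |bb m|)) * 9 := by
    rw [← Finset.sum_mul]
    congr 1
    rw [Fintype.sum_mul_sum, Fintype.sum_prod_type]
    exact Finset.sum_congr rfl fun i _ => Finset.sum_congr rfl fun j _ => abs_mul _ _
  rw [h1]
  ring

end Columns


instance gaussMatrix_prob (n d : ℕ) : IsProbabilityMeasure (gaussMatrix n d) := by
  unfold gaussMatrix
  exact MeasureTheory.Measure.pi.instIsProbabilityMeasure _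

end SMPAux

set_option maxHeartbeats 1000000 in
open scoped ENNReal in
open SMPAux in
/-- Theorem 2 of the paper: linear SMP preserves the walk-based proximity
`S = Ã(A)^K (Ã(A)^K)ᵀ` with high probability: for all `ε, δ > 0` there exists `d₀` such that
for every `d > d₀` and all indices `i j`, with probability `> 1 − δ` over the stochastic
matrix `E` with i.i.d. `N(0,1)` entries,
`|S_{ij} − (1/d)·(Ã(A)^K E)_{i,:}·(Ã(A)^K E)_{j,:}| < ε`. -/
theorem stmt_12 {N : ℕ} (A : Matrix (Fin N) (Fin N) ℝ) (hsym : A.IsSymm)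
    (hnonneg : ∀ i j, 0 ≤ A i j) (K : ℕ)
    (S : Matrix (Fin N) (Fin N) ℝ) (hS : S = normAdj A ^ K * (normAdj A ^ K)ᵀ)
    (ε δ : ℝ) (hε : 0 < ε) (hδ : 0 < δ) :
    ∃ d₀ : ℕ, ∀ d : ℕ, d₀ < d → ∀ i j : Fin N,
      1 - ENNReal.ofReal δ <
        gaussMatrix N d
          {E | |S i j -
            (1 / (d : ℝ)) * ∑ k, (normAdj A ^ K * E) i k * (normAdj A ^ K * E) j k| < ε} := by
  classical
  set B : Matrix (Fin N) (Fin N) ℝ := normAdj A ^ K with hB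
  set P : ℝ := (∑ i' : Fin N, ∑ m : Fin N, |B i' m|) + 1 with hPdef
  have hPtot : 0 ≤ ∑ i' : Fin N, ∑ m : Fin N, |B i' m| :=
    Finset.sum_nonneg fun _ _ => Finset.sum_nonneg fun _ _ => abs_nonneg _
  have hP1 : 1 ≤ P := le_add_of_nonneg_left hPtot
  have hP0 : 0 < P := lt_of_lt_of_le one_pos hP1
  set C : ℝ := 82 * P ^ 4 with hCdef
  have hC0 : 0 < C := by positivity
  set δ' : ℝ := min δ 1 / 2 with hδ'def
  have hδ'0 : 0 < δ' := div_pos (lt_min hδ one_pos) two_pos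
  have hδ'δ : δ' < δ := by
    have h := min_le_left δ 1
    rw [hδ'def]
    linarith
  have hδ'1 : δ' < 1 := by
    have h := min_le_right δ 1
    rw [hδ'def]
    linarith
  refine ⟨⌈C / (δ' * ε ^ 2)⌉₊, fun d hd i j => ?_⟩
  set μ := gaussMatrix N d with hμ
  have hd0 : 0 < d := Nat.lt_of_le_of_lt (Nat.zero_le _) hd
  have hd0R : (0:ℝ) < d := by exact_mod_cast hd0
  have hdne : (d:ℝ) ≠ 0 := ne_of_gt hd0R
  have hdbig : C / (δ' * ε ^ 2) < (d:ℝ) := by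
    calc C / (δ' * ε ^ 2) ≤ (⌈C / (δ' * ε ^ 2)⌉₊ : ℝ) := Nat.le_ceil _
      _ < d := by exact_mod_cast hd
  set c : Fin N → ℝ := fun m => B i m with hc
  set bb : Fin N → ℝ := fun m => B j m with hbb
  set s : ℝ := ∑ m, c m * bb m with hsdef
  set W : Matrix (Fin N) (Fin d) ℝ → ℝ := fun E => ∑ k, gcol c bb k E with hW
  have hSij : S i j = s := by
    rw [hS, hsdef]
    simp [Matrix.mul_apply, Matrix.transpose_apply, hc, hbb]
  have hsetEq : {E : Matrix (Fin N) (Fin d) ℝ |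
      |S i j - (1 / (d:ℝ)) * ∑ k, (B * E) i k * (B * E) j k| < ε}
      = {E : Matrix (Fin N) (Fin d) ℝ | |s - (d:ℝ)⁻¹ * W E| < ε} := by
    ext E
    simp only [Set.mem_setOf_eq, hSij, one_div]
    have hterm : ∀ k, (B * E) i k * (B * E) j k = gcol c bb k E := by
      intro k
      show (B * E) i k * (B * E) j k = (∑ m, c m * E m k) * (∑ m, bb m * E m k)
      rw [Matrix.mul_apply, Matrix.mul_apply]
    rw [show (∑ k, (B * E) i k * (B * E) j k) = W E from
      Finset.sum_congr rfl fun k _ => hterm k]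
  have hWint : Integrable W μ := integrable_finset_sum _ fun k _ => gcol_int c bb k
  have hIW : ∫ E, W E ∂μ = d * s := by
    rw [hW]
    rw [integral_finset_sum _ fun k _ => gcol_int c bb k]
    simp only [gcol_integral, ← hsdef]
    simp [Finset.sum_const, mul_comm]
  have hWW : (fun E => W E * W E) = fun E => ∑ k, ∑ k', gcol c bb k E * gcol c bb k' E := by
    funext E
    simp only [hW]
    exact Finset.sum_mul_sum _ _ _ _
  have hWWint : Integrable (fun E => W E * W E) μ := by
    rw [hWW]
    exact integrable_finset_sum _ fun k _ => integrable_finset_sum _ fun k' _ =>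
      gcol_mul_int c bb k k'
  have hIWW : ∫ E, W E * W E ∂μ
      = (∑ k : Fin d, ∫ E, gcol c bb k E * gcol c bb k E ∂μ)
        + ((d:ℝ) * ((d:ℝ) - 1)) * (s * s) := by
    rw [hWW, integral_finset_sum _ fun k _ => integrable_finset_sum _ fun k' _ =>
      gcol_mul_int c bb k k']
    have hrow : ∀ k : Fin d, ∫ E, (∑ k', gcol c bb k E * gcol c bb k' E) ∂μ
        = ∫ E, gcol c bb k E * gcol c bb k E ∂μ + ((d:ℝ) - 1) * (s * s) := by
      intro k
      rw [integral_finset_sum _ fun k' _ => gcol_mul_int c bb k k']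
      rw [← Finset.add_sum_erase _ _ (Finset.mem_univ k)]
      congr 1
      have hoff : ∀ k' ∈ Finset.univ.erase k,
          ∫ E, gcol c bb k E * gcol c bb k' E ∂μ = s * s := by
        intro k' hk'
        have hne : k ≠ k' := (Finset.ne_of_mem_erase hk').symm
        rw [gcol_mul_integral_off c bb hne, ← hsdef]
      rw [Finset.sum_congr rfl hoff, Finset.sum_const,
        Finset.card_erase_of_mem (Finset.mem_univ k), Finset.card_univ, Fintype.card_fin,
        nsmul_eq_mul, Nat.cast_sub hd0, Nat.cast_one]
    rw [Finset.sum_congr rfl fun k _ => hrow k, Finset.sum_add_distrib, Finset.sum_const,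
      Finset.card_univ, Fintype.card_fin, nsmul_eq_mul]
    ring
  set f : Matrix (Fin N) (Fin d) ℝ → ℝ := fun E => (s - (d:ℝ)⁻¹ * W E) ^ 2 with hf
  have hfeq : f = fun E => (s ^ 2 - (2 * s * (d:ℝ)⁻¹) * W E)
      + ((d:ℝ)⁻¹ * (d:ℝ)⁻¹) * (W E * W E) := by
    funext E
    simp only [hf]
    ring
  have hint1a : Integrable (fun _ : Matrix (Fin N) (Fin d) ℝ => s ^ 2) μ := integrable_const _
  have hint1b : Integrable (fun E => 2 * s * (d:ℝ)⁻¹ * W E) μ := by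
    exact hWint.const_mul _
  have hint1 : Integrable (fun E => s ^ 2 - 2 * s * (d:ℝ)⁻¹ * W E) μ := by
    exact hint1a.sub hint1b
  have hint2 : Integrable (fun E => (d:ℝ)⁻¹ * (d:ℝ)⁻¹ * (W E * W E)) μ := by
    exact hWWint.const_mul _
  have hfint : Integrable f μ := by
    rw [hfeq]
    exact hint1.add hint2
  have hPc : ∑ m, |c m| ≤ P := by
    have h1 : ∑ m, |c m| ≤ ∑ i' : Fin N, ∑ m : Fin N, |B i' m| := by
      have := Finset.single_le_sum (f := fun i' : Fin N => ∑ m : Fin N, |B i' m|)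
        (fun _ _ => Finset.sum_nonneg fun _ _ => abs_nonneg _) (Finset.mem_univ i)
      simpa [hc] using this
    rw [hPdef]
    linarith
  have hPb : ∑ m, |bb m| ≤ P := by
    have h1 : ∑ m, |bb m| ≤ ∑ i' : Fin N, ∑ m : Fin N, |B i' m| := by
      have := Finset.single_le_sum (f := fun i' : Fin N => ∑ m : Fin N, |B i' m|)
        (fun _ _ => Finset.sum_nonneg fun _ _ => abs_nonneg _) (Finset.mem_univ j)
      simpa [hbb] using this
    rw [hPdef]
    linarith
  have hPc0 : 0 ≤ ∑ m, |c m| := Finset.sum_nonneg fun _ _ => abs_nonneg _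
  have hPb0 : 0 ≤ ∑ m, |bb m| := Finset.sum_nonneg fun _ _ => abs_nonneg _
  have hcb : 81 * ((∑ m, |c m|) * (∑ m, |bb m|)) ^ 2 ≤ C := by
    have h4 : (∑ m, |c m|) * (∑ m, |bb m|) ≤ P * P :=
      mul_le_mul hPc hPb hPb0 hP0.le
    have h5 : ((∑ m, |c m|) * (∑ m, |bb m|)) ^ 2 ≤ (P * P) ^ 2 :=
      pow_le_pow_left₀ (mul_nonneg hPc0 hPb0) h4 2
    rw [hCdef]
    nlinarith [hP0, hP1]
  have hSQ : ∑ k : Fin d, ∫ E, gcol c bb k E * gcol c bb k E ∂μ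
      ≤ d * (81 * ((∑ m, |c m|) * (∑ m, |bb m|)) ^ 2) := by
    refine (Finset.sum_le_card_nsmul _ _ _ fun k _ =>
      le_of_abs_le (gcol_sq_integral_abs c bb k)).trans ?_
    rw [Finset.card_univ, Fintype.card_fin, nsmul_eq_mul]
  have hIf : ∫ E, f E ∂μ
      = ((∑ k : Fin d, ∫ E, gcol c bb k E * gcol c bb k E ∂μ) - d * s ^ 2) / (d:ℝ) ^ 2 := by
    rw [hfeq, integral_add hint1 hint2, integral_sub hint1a hint1b, integral_const,
      integral_const_mul, integral_const_mul, hIW, hIWW]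
    simp only [measure_univ, probReal_univ, ENNReal.toReal_one, smul_eq_mul, one_mul]
    field_simp
    ring
  have hfle : ∫ E, f E ∂μ ≤ C / d := by
    rw [hIf, div_le_div_iff₀ (by positivity) hd0R]
    have h7 : (∑ k : Fin d, ∫ E, gcol c bb k E * gcol c bb k E ∂μ) ≤ (d:ℝ) * C :=
      hSQ.trans (mul_le_mul_of_nonneg_left hcb hd0R.le)
    have h8 : ((∑ k : Fin d, ∫ E, gcol c bb k E * gcol c bb k E ∂μ) - (d:ℝ) * s ^ 2)
        ≤ (d:ℝ) * C :=
      le_trans (sub_le_self _ (by positivity)) h7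
    calc ((∑ k : Fin d, ∫ E, gcol c bb k E * gcol c bb k E ∂μ) - (d:ℝ) * s ^ 2) * (d:ℝ)
        ≤ ((d:ℝ) * C) * (d:ℝ) := mul_le_mul_of_nonneg_right h8 hd0R.le
      _ = C * (d:ℝ) ^ 2 := by ring
  have hfnn : 0 ≤ᵐ[μ] f := Filter.Eventually.of_forall fun E => sq_nonneg _
  have hmar := mul_meas_ge_le_integral_of_nonneg hfnn hfint (ε ^ 2)
  set Sc : Set (Matrix (Fin N) (Fin d) ℝ) := {E | |s - (d:ℝ)⁻¹ * W E| < ε}ᶜ with hSc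
  have hsub : Sc ⊆ {E | ε ^ 2 ≤ f E} := by
    intro E hE
    simp only [hSc, Set.mem_compl_iff, Set.mem_setOf_eq, not_lt] at hE
    simp only [Set.mem_setOf_eq, hf]
    calc ε ^ 2 ≤ |s - (d:ℝ)⁻¹ * W E| ^ 2 := pow_le_pow_left₀ hε.le hE 2
      _ = (s - (d:ℝ)⁻¹ * W E) ^ 2 := sq_abs _
  have hScle : (μ Sc).toReal ≤ C / ((d:ℝ) * ε ^ 2) := by
    have h1 : (μ Sc).toReal ≤ (μ {E | ε ^ 2 ≤ f E}).toReal :=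
      ENNReal.toReal_mono (measure_ne_top μ _) (measure_mono hsub)
    have h2 : (μ {E | ε ^ 2 ≤ f E}).toReal ≤ (∫ E, f E ∂μ) / ε ^ 2 := by
      rw [le_div_iff₀ (by positivity)]
      rw [measureReal_def] at hmar
      linarith [hmar]
    have h3 : (∫ E, f E ∂μ) / ε ^ 2 ≤ (C / d) / ε ^ 2 :=
      (div_le_div_iff_of_pos_right (by positivity)).2 hfle
    calc (μ Sc).toReal ≤ (μ {E | ε ^ 2 ≤ f E}).toReal := h1
      _ ≤ (∫ E, f E ∂μ) / ε ^ 2 := h2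
      _ ≤ (C / d) / ε ^ 2 := h3
      _ = C / ((d:ℝ) * ε ^ 2) := by rw [div_div]
  have hlt : C / ((d:ℝ) * ε ^ 2) < δ' := by
    rw [div_lt_iff₀ (by positivity)]
    have h6 := (div_lt_iff₀ (by positivity : (0:ℝ) < δ' * ε ^ 2)).1 hdbig
    nlinarith [h6]
  have hSclt : μ Sc < ENNReal.ofReal δ' := by
    rw [ENNReal.lt_ofReal_iff_toReal_lt (measure_ne_top μ _)]
    exact lt_of_le_of_lt hScle hlt
  have hSc1 : μ Sc < 1 := hSclt.trans (ENNReal.ofReal_lt_one.2 hδ'1)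
  have hScδ : μ Sc < ENNReal.ofReal δ := hSclt.trans_le (ENNReal.ofReal_le_ofReal hδ'δ.le)
  have hWm : Measurable W := by
    rw [hW]
    refine Finset.measurable_sum _ fun k _ => Measurable.mul ?_ ?_ <;>
      exact Finset.measurable_sum _ fun m _ =>
        measurable_const.mul ((measurable_pi_apply k).comp (measurable_pi_apply m))
  have hmeas : MeasurableSet {E : Matrix (Fin N) (Fin d) ℝ | |s - (d:ℝ)⁻¹ * W E| < ε} :=
    measurableSet_lt ((measurable_const.sub (hWm.const_mul _)).abs) measurable_const
  have hcompl : μ {E : Matrix (Fin N) (Fin d) ℝ | |s - (d:ℝ)⁻¹ * W E| < ε} = 1 - μ Sc := by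
    rw [hSc, prob_compl_eq_one_sub hmeas,
      ENNReal.sub_sub_cancel ENNReal.one_ne_top prob_le_one]
  rw [hsetEq, hcompl]
  by_cases hcase : ENNReal.ofReal δ ≤ 1
  · rw [ENNReal.sub_lt_iff_lt_right (by simp) hcase]
    calc (1:ℝ≥0∞) = (1 - μ Sc) + μ Sc := (tsub_add_cancel_of_le hSc1.le).symm
      _ < (1 - μ Sc) + ENNReal.ofReal δ :=
        ENNReal.add_lt_add_left (ne_top_of_le_ne_top ENNReal.one_ne_top tsub_le_self) hScδ
  · push_neg at hcase
    rw [tsub_eq_zero_of_le hcase.le]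
    exact tsub_pos_of_lt hSc1
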